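/- There exists a perfect difference set A ⊆ ℕ such that limsup_{x→∞} A(x)/√x ≥ 1/√2. -/

import Mathlib

open Filter

set_option maxHeartbeats 1000000

/-- `A` is a perfect difference set: every nonzero integer has exactly one
representation as a difference of two elements of `A`. -/
def IsPerfectDifferenceSet (A : Set ℤ) : Prop :=
  ∀ u : ℤ, u ≠ 0 → ∃! p : ℤ × ℤ, p.1 ∈ A ∧ p.2 ∈ A ∧ p.1 - p.2 = u

def Sdn (A : Finset ℤ) : Prop :=
  ∀ a ∈ A, ∀ b ∈ A, ∀ c ∈ A, ∀ d ∈ A, a - b = c - d → a - b ≠ 0 → a = c ∧ b = d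

def HasDiff (A : Finset ℤ) (u : ℤ) : Prop := ∃ a ∈ A, ∃ b ∈ A, a - b = u

-- Bose Sidon set
lemma bose (p : ℕ) (hp : p.Prime) :
    ∃ B : Finset ℤ, B ⊆ Finset.Icc 0 ((p:ℤ)^2 - 2) ∧ B.card = p ∧ Sdn B := by
  haveI : Fact p.Prime := ⟨hp⟩
  set K := GaloisField p 2 with hK
  have hcard : Nat.card K = p ^ 2 := GaloisField.card p 2 (by norm_num)
  have hp2 : 2 ≤ p := hp.two_le
  have hpsq : 2 ≤ p ^ 2 := by nlinarith
  have hpz : (2:ℤ) ≤ (p:ℤ) := by exact_mod_cast hp2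
  have hNpos : (0:ℤ) < (p:ℤ)^2 - 1 := by nlinarith
  obtain ⟨g, hg⟩ := IsCyclic.exists_generator (α := Kˣ)
  have hord : orderOf g = p ^ 2 - 1 := by
    rw [orderOf_eq_card_of_forall_mem_zpowers hg, Nat.card_units, hcard]
  set θ : K := (g : K) with hθ
  have hθne : θ ≠ 0 := Units.ne_zero g
  set i : ZMod p →+* K := algebraMap (ZMod p) K with hi
  have hinj : Function.Injective i := i.injective
  -- θ not in range of i
  have hθnotin : ∀ t : ZMod p, θ ≠ i t := by
    intro t ht
    have h1 : θ ^ p = θ := by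
      rw [ht, ← map_pow, ZMod.pow_card]
    have h2 : θ ^ (p - 1) = 1 := by
      have hstep : θ ^ (p - 1) * θ = θ := by
        rw [← pow_succ, show p - 1 + 1 = p by omega]
        exact h1
      have h1' : (1 : K) * θ = θ := one_mul θ
      exact mul_right_cancel₀ hθne (hstep.trans h1'.symm)
    have h3 : g ^ (p - 1) = 1 := by
      ext
      push_cast [h2]
      exact h2
    have h4 := orderOf_dvd_of_pow_eq_one h3
    rw [hord] at h4
    have h5 := Nat.le_of_dvd (by omega) h4
    have h6 : p ^ 2 ≤ p := by omega
    nlinarith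
  -- linear independence
  have hlin : ∀ α β : ZMod p, i α * θ = i β → α = 0 ∧ β = 0 := by
    intro α β h
    by_cases hα : α = 0
    · subst hα
      rw [map_zero, zero_mul] at h
      exact ⟨rfl, hinj (by rw [map_zero]; exact h.symm)⟩
    · exfalso
      have hiα : i α ≠ 0 := fun hc => hα (hinj (by rw [hc, map_zero]))
      apply hθnotin (α⁻¹ * β)
      rw [map_mul, map_inv₀, ← h]
      rw [← mul_assoc, inv_mul_cancel₀ hiα, one_mul]
  -- the log function
  have hxa : ∀ a : ZMod p, θ - i a ≠ 0 := by
    intro a hc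
    exact hθnotin a (by rwa [sub_eq_zero] at hc)
  have hordz : ((orderOf g : ℤ)) = (p:ℤ)^2 - 1 := by
    rw [hord, Nat.cast_sub (by omega : 1 ≤ p ^ 2)]; push_cast; ring
  have hexp : ∀ a : ZMod p, ∃ n : ℕ, n < p ^ 2 - 1 ∧ (g ^ n : K) = θ - i a := by
    intro a
    obtain ⟨z, hz⟩ := Subgroup.mem_zpowers_iff.mp (hg (Units.mk0 (θ - i a) (hxa a)))
    have h1 : (0:ℤ) ≤ z % ((p:ℤ)^2 - 1) := Int.emod_nonneg z (by omega)
    have h2 : z % ((p:ℤ)^2 - 1) < (p:ℤ)^2 - 1 := Int.emod_lt_of_pos z hNpos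
    refine ⟨(z % ((p:ℤ)^2 - 1)).toNat, ?_, ?_⟩
    · have hcast : ((p ^ 2 - 1 : ℕ) : ℤ) = (p:ℤ)^2 - 1 := by
        rw [Nat.cast_sub (by omega : 1 ≤ p ^ 2)]; push_cast; ring
      omega
    · have hzp : g ^ ((z % ((p:ℤ)^2 - 1)).toNat : ℤ) = g ^ z := by
        rw [Int.toNat_of_nonneg h1, ← hordz, zpow_mod_orderOf]
      rw [zpow_natCast] at hzp
      have hcoe : ((g : K)) ^ (z % ((p:ℤ)^2 - 1)).toNat = ((g ^ (z % ((p:ℤ)^2 - 1)).toNat : Kˣ) : K) := by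
        push_cast; rfl
      rw [hcoe, hzp, hz]
      simp
  choose l hl1 hl2 using hexp
  have linj : Function.Injective l := by
    intro a b hab
    have h4 : θ - i a = θ - i b := by rw [← hl2 a, ← hl2 b, hab]
    have h5 : i a = i b := by linear_combination -h4
    exact hinj h5
  -- key algebraic fact
  have key : ∀ a b c d : ZMod p, l a + l d = l b + l c → a = b ∨ a = c := by
    intro a b c d h
    have h1 : (g ^ (l a + l d) : Kˣ) = g ^ (l b + l c) := by rw [h]
    have h2 : ((g : K)) ^ (l a + l d) = (g : K) ^ (l b + l c) := by
      have := congrArg (Units.val) h1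
      push_cast at this
      exact this
    rw [pow_add, pow_add, hl2 a, hl2 b, hl2 c, hl2 d] at h2
    -- (θ - a)(θ - d) = (θ - b)(θ - c)
    have h3 : i (b + c - (a + d)) * θ = i (b * c - a * d) := by
      rw [map_sub, map_add, map_add, map_sub, map_mul, map_mul]
      linear_combination h2
    obtain ⟨hc1, hc2⟩ := hlin _ _ h3
    have e1 : b + c = a + d := sub_eq_zero.mp hc1
    have e2 : b * c = a * d := sub_eq_zero.mp hc2
    have e3 : (a - b) * (a - c) = 0 := by linear_combination (-a) * e1 + e2
    rcases mul_eq_zero.mp e3 with h' | h'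
    · exact Or.inl (sub_eq_zero.mp h')
    · exact Or.inr (sub_eq_zero.mp h')
  -- build the finset
  refine ⟨(Finset.univ : Finset (ZMod p)).image (fun a => (l a : ℤ)), ?_, ?_, ?_⟩
  · intro x hx
    simp only [Finset.mem_image] at hx
    obtain ⟨a, -, rfl⟩ := hx
    have hla := hl1 a
    have h0 : l a ≤ p ^ 2 - 2 := by omega
    have h1 : ((l a : ℕ) : ℤ) ≤ ((p ^ 2 - 2 : ℕ) : ℤ) := Nat.cast_le.mpr h0
    rw [Nat.cast_sub (by omega : 2 ≤ p ^ 2)] at h1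
    push_cast at h1
    rw [Finset.mem_Icc]
    exact ⟨by positivity, by linarith⟩
  · rw [Finset.card_image_of_injective _ (fun a b hab => linj (by exact_mod_cast hab))]
    simp [ZMod.card]
  · intro x hx y hy z hz w hw hxy hne
    simp only [Finset.mem_image] at hx hy hz hw
    obtain ⟨a, -, rfl⟩ := hx
    obtain ⟨b, -, rfl⟩ := hy
    obtain ⟨c, -, rfl⟩ := hz
    obtain ⟨d, -, rfl⟩ := hw
    have hsum : l a + l d = l b + l c := by exact_mod_cast by omega
    rcases key a b c d hsum with h' | h'
    · exfalso; apply hne; subst h'; omega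
    · subst h'
      have : l d = l b := by omega
      have hdb : d = b := linj this
      subst hdb
      exact ⟨rfl, rfl⟩

lemma sdn_union {A B : Finset ℤ} (hA : Sdn A) (hB : Sdn B)
    (hAB : ∀ a ∈ A, ∀ b ∈ B, a < b)
    (hgapA : ∀ b ∈ B, ∀ a ∈ A, ∀ c ∈ A, ∀ d ∈ A, c - d < b - a)
    (hgapB : ∀ b ∈ B, ∀ a ∈ A, ∀ c ∈ B, ∀ d ∈ B, c - d < b - a)
    (hdiff : ∀ b ∈ B, ∀ b' ∈ B, ∀ a ∈ A, ∀ a' ∈ A, b - b' = a - a' → b = b' ∧ a = a') :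
    Sdn (A ∪ B) := by
  have aux : ∀ a ∈ A ∪ B, ∀ b ∈ A ∪ B, ∀ c ∈ A ∪ B, ∀ d ∈ A ∪ B,
      a - b = c - d → 0 < a - b → a = c ∧ b = d := by
    intro a ha b hb c hc d hd heq hpos
    rw [Finset.mem_union] at ha hb hc hd
    rcases ha with ha | ha <;> rcases hb with hb | hb <;>
      rcases hc with hc | hc <;> rcases hd with hd | hd
    · exact hA a ha b hb c hc d hd heq (by omega)
    · -- a,b,c ∈ A, d ∈ B : c - d < 0
      exact absurd heq (by have := hAB c hc d hd; omega)
    · -- c ∈ B, d ∈ A: c - d > a - b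
      exact absurd heq (by have := hgapA c hc d hd a ha b hb; omega)
    · -- c,d ∈ B, a,b ∈ A: hdiff c d a b
      have := hdiff c hc d hd a ha b hb heq.symm
      omega
    · -- a ∈ A, b ∈ B: a - b < 0
      exact absurd hpos (by have := hAB a ha b hb; omega)
    · exact absurd hpos (by have := hAB a ha b hb; omega)
    · exact absurd hpos (by have := hAB a ha b hb; omega)
    · exact absurd hpos (by have := hAB a ha b hb; omega)
    · -- a ∈ B, b ∈ A, c,d ∈ A
      exact absurd heq (by have := hgapA a ha b hb c hc d hd; omega)
    · exact absurd heq (by have := hAB c hc d hd; omega)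
    · -- a ∈ B, b ∈ A, c ∈ B, d ∈ A : a - c = b - d
      have := hdiff a ha c hc b hb d hd (by omega)
      omega
    · -- a ∈ B, b ∈ A, c,d ∈ B
      exact absurd heq (by have := hgapB a ha b hb c hc d hd; omega)
    · -- a,b ∈ B, c,d ∈ A
      have := hdiff a ha b hb c hc d hd heq
      omega
    · exact absurd heq (by have := hAB c hc d hd; omega)
    · -- a,b ∈ B, c ∈ B, d ∈ A
      exact absurd heq (by have := hgapB c hc d hd a ha b hb; omega)
    · exact hB a ha b hb c hc d hd heq (by omega)
  intro a ha b hb c hc d hd heq hne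
  rcases lt_or_gt_of_ne hne with h | h
  · have := aux b hb a ha d hd c hc (by omega) (by omega)
    exact ⟨this.2, this.1⟩
  · exact aux a ha b hb c hc d hd heq (by omega)

lemma patch_one {A : Finset ℤ} (hA : Sdn A) (hpos : ∀ a ∈ A, 0 < a) (u : ℤ) (hu : 1 ≤ u) :
    ∃ A' : Finset ℤ, A ⊆ A' ∧ (∀ a ∈ A', 0 < a) ∧ Sdn A' ∧ HasDiff A' u := by
  by_cases hmem : HasDiff A u
  · exact ⟨A, Finset.Subset.refl A, hpos, hA, hmem⟩
  set S : ℤ := ∑ a ∈ A, a with hS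
  have hSnn : 0 ≤ S := Finset.sum_nonneg (fun a ha => le_of_lt (hpos a ha))
  have hbound : ∀ a ∈ A, a ≤ S := fun a ha =>
    Finset.single_le_sum (fun b hb => le_of_lt (hpos b hb)) ha
  set a₀ : ℤ := 2 * S + u + 1 with ha₀
  set B : Finset ℤ := {a₀, a₀ + u} with hBdef
  have hmemB : ∀ b ∈ B, b = a₀ ∨ b = a₀ + u := by
    intro b hb
    rw [hBdef] at hb
    simp only [Finset.mem_insert, Finset.mem_singleton] at hb
    exact hb
  have hB : Sdn B := by
    intro a ha b hb c hc d hd heq hne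
    rcases hmemB a ha with rfl | rfl <;> rcases hmemB b hb with rfl | rfl <;>
      rcases hmemB c hc with rfl | rfl <;> rcases hmemB d hd with rfl | rfl <;> omega
  have hnd : ∀ a ∈ A, ∀ a' ∈ A, a - a' ≠ u := by
    intro a ha a' ha' hc
    exact hmem ⟨a, ha, a', ha', hc⟩
  refine ⟨A ∪ B, Finset.subset_union_left, ?_, ?_, ?_⟩
  · intro a ha
    rw [Finset.mem_union] at ha
    rcases ha with ha | ha
    · exact hpos a ha
    · rcases hmemB a ha with rfl | rfl <;> omega
  · refine sdn_union hA hB ?_ ?_ ?_ ?_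
    · intro a ha b hb
      have := hbound a ha
      rcases hmemB b hb with rfl | rfl <;> omega
    · intro b hb a ha c hc d hd
      have h1 := hbound c hc
      have h2 := hpos d hd
      have h3 := hbound a ha
      rcases hmemB b hb with rfl | rfl <;> omega
    · intro b hb a ha c hc d hd
      have h3 := hbound a ha
      rcases hmemB b hb with rfl | rfl <;> rcases hmemB c hc with rfl | rfl <;>
        rcases hmemB d hd with rfl | rfl <;> omega
    · intro b hb b' hb' a ha a' ha' heq
      rcases hmemB b hb with rfl | rfl <;> rcases hmemB b' hb' with rfl | rfl
      · constructor
        · rfl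
        · omega
      · exfalso; exact hnd a' ha' a ha (by omega)
      · exfalso; exact hnd a ha a' ha' (by omega)
      · constructor
        · rfl
        · omega
  · refine ⟨a₀ + u, ?_, a₀, ?_, by ring⟩ <;>
      · rw [Finset.mem_union, hBdef]; simp

lemma hasdiff_mono {A A' : Finset ℤ} (h : A ⊆ A') {u : ℤ} (hu : HasDiff A u) : HasDiff A' u := by
  obtain ⟨a, ha, b, hb, hab⟩ := hu
  exact ⟨a, h ha, b, h hb, hab⟩


lemma patch_upto {A : Finset ℤ} (hA : Sdn A) (hpos : ∀ a ∈ A, 0 < a) (k : ℕ) :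
    ∃ A' : Finset ℤ, A ⊆ A' ∧ (∀ a ∈ A', 0 < a) ∧ Sdn A' ∧
      ∀ u : ℤ, 1 ≤ u → u ≤ (k : ℤ) → HasDiff A' u := by
  induction k with
  | zero => exact ⟨A, Finset.Subset.refl A, hpos, hA, fun u h1 h2 => absurd (h1.trans h2) (by norm_num)⟩
  | succ n ih =>
    obtain ⟨A₁, hsub₁, hpos₁, hS₁, hcov₁⟩ := ih
    obtain ⟨A₂, hsub₂, hpos₂, hS₂, hd₂⟩ := patch_one hS₁ hpos₁ ((n : ℤ) + 1) (by omega)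
    refine ⟨A₂, hsub₁.trans hsub₂, hpos₂, hS₂, fun u h1 h2 => ?_⟩
    by_cases hu : u ≤ (n : ℤ)
    · exact hasdiff_mono hsub₂ (hcov₁ u h1 hu)
    · have : u = (n : ℤ) + 1 := by push_cast at h2 ⊢; omega
      subst this
      exact hd₂

-- real analysis bound
lemma ratio_bound (L S k p : ℕ) (hp : ((k+1) * (L + S + 1) + 1 : ℕ) ≤ p) :
    (1 / Real.sqrt 2 - 1 / (k + 1)) * Real.sqrt ((S : ℝ) + 2 * (p:ℝ)^2 + 1) ≤ (p : ℝ) - L := by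
  set s : ℝ := Real.sqrt 2 with hs
  have hs2 : s ^ 2 = 2 := Real.sq_sqrt (by norm_num)
  have hs1 : 1 ≤ s := by nlinarith [Real.sqrt_nonneg 2]
  have hsle : s ≤ 2 := by nlinarith [Real.sqrt_nonneg 2]
  have hpL : (L : ℝ) + 1 ≤ p := by exact_mod_cast Nat.le_trans (by nlinarith) hp
  have hpbig : ((k:ℝ) + 1) * ((L:ℝ) + (S:ℝ) + 1) + 1 ≤ (p : ℝ) := by exact_mod_cast hp
  have hSnn : (0:ℝ) ≤ S := Nat.cast_nonneg S
  have hknn : (0:ℝ) ≤ k := Nat.cast_nonneg k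
  have hpnn : (0:ℝ) ≤ p := Nat.cast_nonneg p
  -- sqrt bound
  have hsqrt : Real.sqrt ((S : ℝ) + 2 * (p:ℝ)^2 + 1) ≤ s * p + (S + 1) := by
    have e : (s * p + (S + 1))^2 = 2 * (p:ℝ)^2 + 2*s*(p:ℝ)*((S:ℝ)+1) + ((S:ℝ)+1)^2 := by
      linear_combination (p:ℝ)^2 * hs2
    have h1 : (S : ℝ) + 2 * (p:ℝ)^2 + 1 ≤ (s * p + (S + 1))^2 := by
      nlinarith [mul_nonneg (mul_nonneg (by linarith : (0:ℝ) ≤ s) hpnn)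
        (by linarith : (0:ℝ) ≤ (S:ℝ)+1), mul_nonneg hSnn (by linarith : (0:ℝ) ≤ (S:ℝ)+1)]
    calc Real.sqrt ((S : ℝ) + 2 * (p:ℝ)^2 + 1) ≤ Real.sqrt ((s * p + (S + 1))^2) :=
          Real.sqrt_le_sqrt h1
      _ = s * p + (S + 1) := Real.sqrt_sq (by positivity)
  by_cases hneg : 1 / s - 1 / (k + 1) ≤ 0
  · have h2 : Real.sqrt ((S : ℝ) + 2 * (p:ℝ)^2 + 1) ≥ 0 := Real.sqrt_nonneg _
    nlinarith
  push_neg at hneg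
  have key : (1 / s - 1 / (k + 1)) * (s * p + (S + 1)) ≤ (p : ℝ) - L := by
    have hk1 : (0:ℝ) < (k:ℝ) + 1 := by linarith
    have hspos : (0:ℝ) < s := by linarith
    have expand : (1 / s - 1 / (k + 1)) * (s * p + (S + 1))
        = p + (S+1)/s - (s*p)/(k+1) - (S+1)/(k+1) := by
      field_simp
      ring
    rw [expand]
    have h3 : (S+1)/s ≤ (S:ℝ)+1 := by
      rw [div_le_iff₀ hspos]; nlinarith
    have h4 : (p:ℝ)/(k+1) ≤ (s*p)/(k+1) := by
      apply div_le_div_of_nonneg_right ?_ hk1.le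
      nlinarith
    have h5 : (0:ℝ) ≤ (S+1)/(k+1) := by positivity
    have h6 : (L:ℝ) + (S:ℝ) + 1 ≤ (p:ℝ)/(k+1) := by
      rw [le_div_iff₀ hk1]
      nlinarith
    linarith
  calc (1 / s - 1 / (k + 1)) * Real.sqrt ((S : ℝ) + 2 * (p:ℝ)^2 + 1)
      ≤ (1 / s - 1 / (k + 1)) * (s * p + (S + 1)) := by
        apply mul_le_mul_of_nonneg_left hsqrt (le_of_lt hneg)
    _ ≤ (p : ℝ) - L := key

lemma block_step {A : Finset ℤ} (hA : Sdn A) (hpos : ∀ a ∈ A, 0 < a) (k : ℕ) :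
    ∃ A' : Finset ℤ, A ⊆ A' ∧ (∀ a ∈ A', 0 < a) ∧ Sdn A' ∧
      ∃ x : ℝ, (k : ℝ) ≤ x ∧ (∀ a ∈ A', (a : ℝ) ≤ x) ∧
        (1 / Real.sqrt 2 - 1 / (k + 1)) * Real.sqrt x ≤ (A'.card : ℝ) := by
  classical
  -- the sum bound
  set Sn : ℕ := (∑ a ∈ A, a).toNat with hSn
  have hSsum : (Sn : ℤ) = ∑ a ∈ A, a := by
    rw [hSn, Int.toNat_of_nonneg (Finset.sum_nonneg (fun a ha => (hpos a ha).le))]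
  have hbound : ∀ a ∈ A, a ≤ (Sn : ℤ) := by
    intro a ha
    rw [hSsum]
    exact Finset.single_le_sum (fun b hb => (hpos b hb).le) ha
  set L : ℕ := A.card ^ 2 with hL
  -- difference set
  set DA : Finset ℤ := (A ×ˢ A).image (fun q => q.1 - q.2) with hDA
  have hDAcard : DA.card ≤ L := by
    calc DA.card ≤ (A ×ˢ A).card := Finset.card_image_le
      _ = L := by rw [Finset.card_product, hL, sq]
  have hDAmem : ∀ a ∈ A, ∀ a' ∈ A, a - a' ∈ DA := by
    intro a ha a' ha'
    rw [hDA]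
    exact Finset.mem_image.mpr ⟨(a, a'), Finset.mem_product.mpr ⟨ha, ha'⟩, rfl⟩
  -- pick the prime
  obtain ⟨p, hple, hp⟩ := Nat.exists_infinite_primes ((k+1) * (L + Sn + 1) + 1)
  have hp2 : 2 ≤ p := hp.two_le
  have hpS : Sn < p := by nlinarith [Nat.one_le_iff_ne_zero.mpr (by positivity : (k+1) * (L + Sn + 1) ≠ 0)]
  have hpL : L < p := by nlinarith
  obtain ⟨B₀, hB₀sub, hB₀card, hB₀S⟩ := bose p hp
  have hB₀mem : ∀ b ∈ B₀, 0 ≤ b ∧ b ≤ (p:ℤ)^2 - 2 := by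
    intro b hb
    have := hB₀sub hb
    rw [Finset.mem_Icc] at this
    exact this
  -- remove bad elements
  set Bad : Finset ℤ := B₀.filter (fun s => ∃ s' ∈ B₀, (s - s') ∈ DA ∧ s - s' ≠ 0) with hBad
  set wit : ℤ → ℤ := fun s =>
    if h : ∃ s', s' ∈ B₀ ∧ (s - s') ∈ DA ∧ s - s' ≠ 0 then s - h.choose else 0 with hwit
  have hBadcard : Bad.card ≤ L := by
    have hinj : ∀ s₁ ∈ Bad, ∀ s₂ ∈ Bad, wit s₁ = wit s₂ → s₁ = s₂ := by
      intro s₁ hs₁ s₂ hs₂ hw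
      rw [hBad, Finset.mem_filter] at hs₁ hs₂
      obtain ⟨hs₁B, h₁⟩ := hs₁
      obtain ⟨hs₂B, h₂⟩ := hs₂
      have h₁' : ∃ s', s' ∈ B₀ ∧ (s₁ - s') ∈ DA ∧ s₁ - s' ≠ 0 := by
        obtain ⟨s', h'⟩ := h₁; exact ⟨s', h'⟩
      have h₂' : ∃ s', s' ∈ B₀ ∧ (s₂ - s') ∈ DA ∧ s₂ - s' ≠ 0 := by
        obtain ⟨s', h'⟩ := h₂; exact ⟨s', h'⟩
      have e₁ : wit s₁ = s₁ - h₁'.choose := by rw [hwit]; simp only [dif_pos h₁']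
      have e₂ : wit s₂ = s₂ - h₂'.choose := by rw [hwit]; simp only [dif_pos h₂']
      obtain ⟨hc₁B, hc₁DA, hc₁ne⟩ := h₁'.choose_spec
      obtain ⟨hc₂B, hc₂DA, hc₂ne⟩ := h₂'.choose_spec
      rw [e₁, e₂] at hw
      exact (hB₀S s₁ hs₁B h₁'.choose hc₁B s₂ hs₂B h₂'.choose hc₂B hw hc₁ne).1
    have hmap : ∀ s ∈ Bad, wit s ∈ DA := by
      intro s hs
      rw [hBad, Finset.mem_filter] at hs
      obtain ⟨hsB, h⟩ := hs
      have h' : ∃ s', s' ∈ B₀ ∧ (s - s') ∈ DA ∧ s - s' ≠ 0 := by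
        obtain ⟨s', hh⟩ := h; exact ⟨s', hh⟩
      rw [hwit]
      simp only [dif_pos h']
      exact h'.choose_spec.2.1
    calc Bad.card ≤ DA.card := Finset.card_le_card_of_injOn wit hmap hinj
      _ ≤ L := hDAcard
  set B' : Finset ℤ := B₀ \ Bad with hB'
  have hB'sub : B' ⊆ B₀ := Finset.sdiff_subset
  have hB'card : (p : ℤ) - L ≤ B'.card := by
    have hBadsub : Bad ⊆ B₀ := by rw [hBad]; exact Finset.filter_subset _ _
    have h1 : B'.card = B₀.card - Bad.card := by rw [hB', Finset.card_sdiff_of_subset hBadsub]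
    have hple2 : p - L ≤ B'.card := by omega
    have hcast : ((p - L : ℕ) : ℤ) ≤ (B'.card : ℤ) := Nat.cast_le.mpr hple2
    calc (p:ℤ) - L ≤ ((p - L : ℕ) : ℤ) := by omega
      _ ≤ _ := hcast
  have hB'S : Sdn B' := by
    intro a ha b hb c hc d hd heq hne
    exact hB₀S a (hB'sub ha) b (hB'sub hb) c (hB'sub hc) d (hB'sub hd) heq hne
  have hB'avoid : ∀ s ∈ B', ∀ s' ∈ B', s - s' ≠ 0 → (s - s') ∉ DA := by
    intro s hs s' hs' hne hmem
    rw [hB', Finset.mem_sdiff] at hs hs'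
    apply hs.2
    rw [hBad, Finset.mem_filter]
    exact ⟨hs.1, s', hs'.1, hmem, hne⟩
  -- translate
  set c : ℤ := (Sn : ℤ) + (p:ℤ)^2 + 1 with hc
  set Bf : Finset ℤ := B'.image (fun s => c + s) with hBf
  have hBfmem : ∀ b ∈ Bf, ∃ s ∈ B', b = c + s := by
    intro b hb
    rw [hBf, Finset.mem_image] at hb
    obtain ⟨s, hs, rfl⟩ := hb
    exact ⟨s, hs, rfl⟩
  have hBfcard : Bf.card = B'.card := Finset.card_image_of_injective _ (fun x y => by omega)
  have hBfS : Sdn Bf := by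
    intro a ha b hb x hx d hd heq hne
    obtain ⟨sa, hsa, rfl⟩ := hBfmem a ha
    obtain ⟨sb, hsb, rfl⟩ := hBfmem b hb
    obtain ⟨sx, hsx, rfl⟩ := hBfmem x hx
    obtain ⟨sd, hsd, rfl⟩ := hBfmem d hd
    have := hB'S sa hsa sb hsb sx hsx sd hsd (by omega) (by omega)
    omega
  have hB₀range : ∀ s ∈ B', 0 ≤ s ∧ s ≤ (p:ℤ)^2 - 2 := fun s hs => hB₀mem s (hB'sub hs)
  set A' : Finset ℤ := A ∪ Bf with hA'
  have hposA' : ∀ a ∈ A', 0 < a := by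
    intro a ha
    rw [hA', Finset.mem_union] at ha
    rcases ha with ha | ha
    · exact hpos a ha
    · obtain ⟨s, hs, rfl⟩ := hBfmem a ha
      have := (hB₀range s hs).1
      have hp2' : (2:ℤ) ≤ (p:ℤ) := by exact_mod_cast hp2
      have : (0:ℤ) ≤ (Sn:ℤ) := Int.natCast_nonneg Sn
      nlinarith [hc]
  have hSnnn : (0:ℤ) ≤ (Sn:ℤ) := Int.natCast_nonneg Sn
  have hp2' : (2:ℤ) ≤ (p:ℤ) := by exact_mod_cast hp2
  have hpS' : (Sn : ℤ) < (p:ℤ) := by exact_mod_cast hpS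
  have hSA' : Sdn A' := by
    refine sdn_union hA hBfS ?_ ?_ ?_ ?_
    · intro a ha b hb
      obtain ⟨s, hs, rfl⟩ := hBfmem b hb
      have h1 := hbound a ha
      have h2 := (hB₀range s hs).1
      nlinarith [hc]
    · intro b hb a ha x hx d hd
      obtain ⟨s, hs, rfl⟩ := hBfmem b hb
      have h1 := hbound a ha
      have h2 := (hB₀range s hs).1
      have h3 := hbound x hx
      have h4 := hpos d hd
      nlinarith [hc]
    · intro b hb a ha x hx d hd
      obtain ⟨s, hs, rfl⟩ := hBfmem b hb
      obtain ⟨sx, hsx, rfl⟩ := hBfmem x hx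
      obtain ⟨sd, hsd, rfl⟩ := hBfmem d hd
      have h1 := hbound a ha
      have h2 := (hB₀range s hs).1
      have h3 := (hB₀range sx hsx).2
      have h4 := (hB₀range sd hsd).1
      nlinarith [hc]
    · intro b hb b' hb' a ha a' ha' heq
      obtain ⟨s, hs, rfl⟩ := hBfmem b hb
      obtain ⟨s', hs', rfl⟩ := hBfmem b' hb'
      by_cases hss : s = s'
      · subst hss
        have : a = a' := by omega
        exact ⟨rfl, this⟩
      · exfalso
        apply hB'avoid s hs s' hs' (by omega)
        have : s - s' = a - a' := by omega
        rw [this]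
        exact hDAmem a ha a' ha'
  -- the witness x
  refine ⟨A', Finset.subset_union_left, hposA', hSA', (Sn : ℝ) + 2 * (p:ℝ)^2 + 1, ?_, ?_, ?_⟩
  · have hkp : (k : ℝ) ≤ (p : ℝ) := by
      have : k ≤ p := by nlinarith
      exact_mod_cast this
    have hpr : (2:ℝ) ≤ (p:ℝ) := by exact_mod_cast hp2
    nlinarith [Nat.cast_nonneg (α := ℝ) Sn]
  · intro a ha
    rw [hA', Finset.mem_union] at ha
    rcases ha with ha | ha
    · have h1 := hbound a ha
      have h2 : (a : ℝ) ≤ (Sn : ℝ) := by exact_mod_cast h1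
      have hpr : (2:ℝ) ≤ (p:ℝ) := by exact_mod_cast hp2
      nlinarith
    · obtain ⟨s, hs, rfl⟩ := hBfmem a ha
      have h2 := (hB₀range s hs).2
      have : (c + s : ℤ) ≤ (Sn : ℤ) + 2 * (p:ℤ)^2 - 1 := by
        have := hc
        nlinarith
      have h3 : ((c + s : ℤ) : ℝ) ≤ ((Sn : ℤ) : ℝ) + 2 * (((p:ℕ) : ℤ) : ℝ)^2 - 1 := by
        exact_mod_cast this
      push_cast at h3 ⊢
      linarith
  · have hrb := ratio_bound L Sn k p hple
    have hcard : ((p:ℝ) - L) ≤ (A'.card : ℝ) := by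
      have h1 : Bf.card ≤ A'.card := Finset.card_le_card (Finset.subset_union_right)
      have h2 : (p : ℤ) - L ≤ (A'.card : ℤ) := by
        rw [← hBfcard] at hB'card
        calc (p:ℤ) - L ≤ (Bf.card : ℤ) := hB'card
          _ ≤ _ := Nat.cast_le.mpr h1
      exact_mod_cast h2
    linarith

lemma exists_step (A : Finset ℤ) (hA : Sdn A) (hpos : ∀ a ∈ A, 0 < a) (k : ℕ) :
    ∃ A' : Finset ℤ, A ⊆ A' ∧ (∀ a ∈ A', 0 < a) ∧ Sdn A' ∧
      (∀ u : ℤ, 1 ≤ u → u ≤ (k : ℤ) → HasDiff A' u) ∧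
      ∃ x : ℝ, (k : ℝ) ≤ x ∧ (∀ a ∈ A', (a : ℝ) ≤ x) ∧
        (1 / Real.sqrt 2 - 1 / (k + 1)) * Real.sqrt x ≤ (A'.card : ℝ) := by
  obtain ⟨A₁, h₁sub, h₁pos, h₁S, h₁cov⟩ := patch_upto hA hpos k
  obtain ⟨A₂, h₂sub, h₂pos, h₂S, hx⟩ := block_step h₁S h₁pos k
  refine ⟨A₂, h₁sub.trans h₂sub, h₂pos, h₂S, ?_, hx⟩
  intro u hu1 hu2
  obtain ⟨a, ha, b, hb, hab⟩ := h₁cov u hu1 hu2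
  exact ⟨a, h₂sub ha, b, h₂sub hb, hab⟩

noncomputable def seqS : (k : ℕ) → {A : Finset ℤ // (∀ a ∈ A, 0 < a) ∧ Sdn A}
  | 0 => ⟨∅, by simp, by intro a ha; simp at ha⟩
  | k + 1 =>
    let prev := seqS k
    let h := exists_step prev.1 prev.2.2 prev.2.1 (k + 1)
    ⟨h.choose, h.choose_spec.2.1, h.choose_spec.2.2.1⟩

lemma seqS_spec (k : ℕ) :
    (seqS k).1 ⊆ (seqS (k+1)).1 ∧
    (∀ u : ℤ, 1 ≤ u → u ≤ ((k+1 : ℕ) : ℤ) → HasDiff (seqS (k+1)).1 u) ∧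
      ∃ x : ℝ, ((k+1 : ℕ) : ℝ) ≤ x ∧ (∀ a ∈ (seqS (k+1)).1, (a : ℝ) ≤ x) ∧
        (1 / Real.sqrt 2 - 1 / ((k+1 : ℕ) + 1)) * Real.sqrt x ≤ (((seqS (k+1)).1.card : ℕ) : ℝ) := by
  have h := (exists_step (seqS k).1 (seqS k).2.2 (seqS k).2.1 (k + 1)).choose_spec
  exact ⟨h.1, h.2.2.2.1, h.2.2.2.2⟩

lemma seqS_mono : ∀ {m n : ℕ}, m ≤ n → (seqS m).1 ⊆ (seqS n).1 := by
  intro m n h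
  induction n with
  | zero => rw [Nat.le_zero.mp h]
  | succ n ih =>
    rcases Nat.lt_or_ge m (n+1) with h' | h'
    · exact (ih (by omega)).trans (seqS_spec n).1
    · rw [Nat.le_antisymm h h']

noncomputable def Aset : Set ℤ := ⋃ k, ((seqS k).1 : Set ℤ)

lemma mem_Aset {a : ℤ} : a ∈ Aset ↔ ∃ k, a ∈ (seqS k).1 := by
  simp [Aset]

lemma Aset_pos : ∀ a ∈ Aset, 0 < a := by
  intro a ha
  obtain ⟨k, hk⟩ := mem_Aset.mp ha
  exact (seqS k).2.1 a hk

lemma Aset_perfect : IsPerfectDifferenceSet Aset := by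
  have huniq : ∀ u : ℤ, u ≠ 0 → ∀ q : ℤ × ℤ, (q.1 ∈ Aset ∧ q.2 ∈ Aset ∧ q.1 - q.2 = u) →
      ∀ q' : ℤ × ℤ, (q'.1 ∈ Aset ∧ q'.2 ∈ Aset ∧ q'.1 - q'.2 = u) → q = q' := by
    rintro u hu ⟨a, b⟩ ⟨ha, hb, hab⟩ ⟨c, d⟩ ⟨hc, hd, hcd⟩
    obtain ⟨k₁, hk₁⟩ := mem_Aset.mp ha
    obtain ⟨k₂, hk₂⟩ := mem_Aset.mp hb
    obtain ⟨k₃, hk₃⟩ := mem_Aset.mp hc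
    obtain ⟨k₄, hk₄⟩ := mem_Aset.mp hd
    set m := max (max k₁ k₂) (max k₃ k₄) with hm
    have h1 : a ∈ (seqS m).1 := seqS_mono (by omega) hk₁
    have h2 : b ∈ (seqS m).1 := seqS_mono (by omega) hk₂
    have h3 : c ∈ (seqS m).1 := seqS_mono (by omega) hk₃
    have h4 : d ∈ (seqS m).1 := seqS_mono (by omega) hk₄
    have := (seqS m).2.2 a h1 b h2 c h3 d h4 (by simp at hab hcd; omega) (by simp at hab; omega)
    simp only [Prod.mk.injEq]
    exact this
  have hex : ∀ u : ℤ, 1 ≤ u → ∃ a ∈ Aset, ∃ b ∈ Aset, a - b = u := by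
    intro u hu
    have hk : u ≤ ((u.toNat : ℕ) : ℤ) := by omega
    obtain ⟨n, hn⟩ : ∃ n : ℕ, u.toNat = n + 1 := ⟨u.toNat - 1, by omega⟩
    obtain ⟨a, ha, b, hb, hab⟩ := (seqS_spec n).2.1 u hu (by rw [← hn]; omega)
    exact ⟨a, mem_Aset.mpr ⟨n+1, ha⟩, b, mem_Aset.mpr ⟨n+1, hb⟩, hab⟩
  intro u hu
  rcases lt_or_gt_of_ne hu with h | h
  · obtain ⟨a, ha, b, hb, hab⟩ := hex (-u) (by omega)
    refine ⟨(b, a), ⟨hb, ha, by omega⟩, ?_⟩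
    rintro ⟨c, d⟩ hcd
    exact huniq u hu (c, d) hcd (b, a) ⟨hb, ha, by omega⟩
  · obtain ⟨a, ha, b, hb, hab⟩ := hex u (by omega)
    refine ⟨(a, b), ⟨ha, hb, hab⟩, ?_⟩
    rintro ⟨c, d⟩ hcd
    exact huniq u hu (c, d) hcd (a, b) ⟨ha, hb, hab⟩

noncomputable def fA : ℝ → ℝ := fun x => (({a ∈ Aset | (a : ℝ) ≤ x}).ncard : ℝ) / Real.sqrt x

lemma Aset_cut_finite (x : ℝ) : {a ∈ Aset | (a : ℝ) ≤ x}.Finite := by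
  apply (Set.finite_Icc (1 : ℤ) ⌈x⌉).subset
  rintro a ⟨ha, hax⟩
  refine ⟨Aset_pos a ha, ?_⟩
  have h1 : (a : ℝ) ≤ (⌈x⌉ : ℝ) := le_trans hax (Int.le_ceil x)
  exact_mod_cast h1

lemma fA_bounded : ∀ x : ℝ, 4 ≤ x → fA x ≤ 3 := by
  intro x hx
  have hfin := Aset_cut_finite x
  set T : Finset ℤ := hfin.toFinset with hT
  have hmem : ∀ a, a ∈ T ↔ (a ∈ Aset ∧ (a : ℝ) ≤ x) := by
    intro a
    rw [hT, Set.Finite.mem_toFinset]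
    rfl
  have hncard : ({a ∈ Aset | (a : ℝ) ≤ x}).ncard = T.card := by
    rw [Set.ncard_eq_toFinset_card _ hfin]
  set m : ℕ := T.card with hm
  set N : ℤ := ⌈x⌉ with hN
  have hNx : (N : ℝ) ≤ x + 1 := le_of_lt (Int.ceil_lt_add_one x)
  have hNpos : 1 ≤ N := by
    have h0 := Int.ceil_pos.mpr (by linarith : (0:ℝ) < x)
    omega
  -- injective difference map
  have hinj : ∀ q ∈ T.offDiag, ∀ q' ∈ T.offDiag,
      (fun q : ℤ × ℤ => q.1 - q.2) q = (fun q : ℤ × ℤ => q.1 - q.2) q' → q = q' := by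
    rintro ⟨a, b⟩ hq ⟨c, d⟩ hq' heq
    simp only [Finset.mem_offDiag] at hq hq'
    obtain ⟨ha, hb, hab⟩ := hq
    obtain ⟨hc, hd, hcd⟩ := hq'
    simp only at heq
    have hu : a - b ≠ 0 := by omega
    obtain ⟨q₀, hq₀, huniq⟩ := Aset_perfect (a - b) hu
    have h1 := huniq (a, b) ⟨((hmem a).mp ha).1, ((hmem b).mp hb).1, rfl⟩
    have h2 := huniq (c, d) ⟨((hmem c).mp hc).1, ((hmem d).mp hd).1, by simp; omega⟩
    exact h1.trans h2.symm
  have hmaps : ∀ q ∈ T.offDiag, (fun q : ℤ × ℤ => q.1 - q.2) q ∈ (Finset.Icc (-N) N).erase 0 := by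
    rintro ⟨a, b⟩ hq
    simp only [Finset.mem_offDiag] at hq
    obtain ⟨ha, hb, hab⟩ := hq
    have ha1 := Aset_pos a ((hmem a).mp ha).1
    have hb1 := Aset_pos b ((hmem b).mp hb).1
    have ha2 : (a:ℝ) ≤ x := ((hmem a).mp ha).2
    have hb2 : (b:ℝ) ≤ x := ((hmem b).mp hb).2
    have haN : a ≤ N := by
      have : (a : ℝ) ≤ (N : ℝ) := le_trans ha2 (Int.le_ceil x)
      exact_mod_cast this
    have hbN : b ≤ N := by
      have : (b : ℝ) ≤ (N : ℝ) := le_trans hb2 (Int.le_ceil x)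
      exact_mod_cast this
    show a - b ∈ _
    rw [Finset.mem_erase, Finset.mem_Icc]
    exact ⟨by omega, by omega, by omega⟩
  have hcount : T.offDiag.card ≤ ((Finset.Icc (-N) N).erase 0).card :=
    Finset.card_le_card_of_injOn _ hmaps hinj
  have hIcc : (Finset.Icc (-N) N).card = (2*N + 1).toNat := by
    rw [Int.card_Icc]
    congr 1
    omega
  have hzero : (0:ℤ) ∈ Finset.Icc (-N) N := by rw [Finset.mem_Icc]; omega
  have herase : ((Finset.Icc (-N) N).erase 0).card = (2*N+1).toNat - 1 := by
    rw [Finset.card_erase_of_mem hzero, hIcc]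
  have hoff : T.offDiag.card = m * m - m := by rw [Finset.offDiag_card]
  have hmain : (m:ℝ) * m - m ≤ 2 * ((N:ℝ)) := by
    have h1 : m * m - m ≤ (2*N+1).toNat - 1 := by omega
    have h2 : ((2*N+1).toNat : ℤ) = 2*N+1 := Int.toNat_of_nonneg (by omega)
    have hmm : m ≤ m * m := by
      rcases Nat.eq_zero_or_pos m with h | h
      · simp [h]
      · exact Nat.le_mul_of_pos_left m h
    have hcast : ((m * m : ℕ) : ℤ) = (m:ℤ) * m := by push_cast; ring
    have h3 : (m : ℤ) * m - m ≤ 2 * N := by omega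
    exact_mod_cast h3
  -- conclude
  have hx0 : (0:ℝ) ≤ x := by linarith
  have hsx : 2 ≤ Real.sqrt x := by
    have h4 : Real.sqrt 4 = 2 := by
      rw [show (4:ℝ) = 2^2 by norm_num, Real.sqrt_sq (by norm_num : (0:ℝ) ≤ 2)]
    calc (2:ℝ) = Real.sqrt 4 := h4.symm
      _ ≤ Real.sqrt x := Real.sqrt_le_sqrt hx
  have hsxpos : 0 < Real.sqrt x := by linarith
  rw [show fA x = (({a ∈ Aset | (a : ℝ) ≤ x}).ncard : ℝ) / Real.sqrt x from rfl, hncard]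
  rw [div_le_iff₀ hsxpos]
  rcases le_or_gt m 6 with hm6 | hm6
  · have : (m:ℝ) ≤ 6 := by exact_mod_cast hm6
    nlinarith
  · have hm7 : (7:ℝ) ≤ m := by exact_mod_cast hm6
    have h9 : (m:ℝ)^2 ≤ 9 * x := by nlinarith
    nlinarith [Real.sq_sqrt hx0, Real.sqrt_nonneg x]


lemma fA_frequently {b : ℝ} (hb : b < 1 / Real.sqrt 2) : ∃ᶠ x in atTop, b ≤ fA x := by
  rw [frequently_atTop]
  intro N
  -- choose k large
  have hpos : 0 < 1 / Real.sqrt 2 - b := by linarith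
  obtain ⟨k₁, hk₁⟩ := exists_nat_gt (1 / (1 / Real.sqrt 2 - b))
  obtain ⟨k₂, hk₂⟩ := exists_nat_gt N
  set k := max k₁ k₂ with hk
  obtain ⟨x, hx1, hx2, hx3⟩ := (seqS_spec k).2.2
  have hxN : N ≤ x := by
    have h1 : (k₂ : ℝ) ≤ (k : ℝ) := by exact_mod_cast le_max_right k₁ k₂
    have h2 : ((k+1 : ℕ) : ℝ) = (k:ℝ) + 1 := by push_cast; ring
    linarith [hx1, h2 ▸ hx1]
  refine ⟨x, hxN, ?_⟩
  -- bound the count from below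
  have hx1' : (1:ℝ) ≤ x := by
    have h2 : ((k+1 : ℕ) : ℝ) = (k:ℝ) + 1 := by push_cast; ring
    have : (0:ℝ) ≤ (k:ℝ) := Nat.cast_nonneg k
    linarith [h2 ▸ hx1]
  have hsub : ((seqS (k+1)).1 : Set ℤ) ⊆ {a ∈ Aset | (a : ℝ) ≤ x} := by
    intro a ha
    rw [Finset.mem_coe] at ha
    exact ⟨mem_Aset.mpr ⟨k+1, ha⟩, hx2 a ha⟩
  have hcard : ((seqS (k+1)).1.card : ℝ) ≤ (({a ∈ Aset | (a : ℝ) ≤ x}).ncard : ℝ) := by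
    have h1 : ((seqS (k+1)).1 : Set ℤ).ncard ≤ ({a ∈ Aset | (a : ℝ) ≤ x}).ncard :=
      Set.ncard_le_ncard hsub (Aset_cut_finite x)
    rw [Set.ncard_coe_finset] at h1
    exact_mod_cast h1
  have hsxpos : 0 < Real.sqrt x := Real.sqrt_pos.mpr (by linarith)
  have hblow : b ≤ 1 / Real.sqrt 2 - 1 / ((k+1 : ℕ) + 1) := by
    have h1 : (k₁ : ℝ) ≤ ((k+1:ℕ) : ℝ) + 1 := by
      have : (k₁ : ℝ) ≤ (k : ℝ) := by exact_mod_cast le_max_left k₁ k₂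
      push_cast
      linarith
    have h2 : 0 < ((k+1:ℕ) : ℝ) + 1 := by positivity
    have h3 : 1 / (((k+1:ℕ) : ℝ) + 1) ≤ 1 / Real.sqrt 2 - b := by
      rw [div_le_iff₀ h2]
      have h4 : 1 / (1 / Real.sqrt 2 - b) < ((k+1:ℕ) : ℝ) + 1 := lt_of_lt_of_le hk₁ h1
      rw [div_lt_iff₀ hpos] at h4
      nlinarith
    linarith
  have hfinal : (1 / Real.sqrt 2 - 1 / ((k+1 : ℕ) + 1)) ≤ fA x := by
    have h5 := hx3
    have h6 : (1 / Real.sqrt 2 - 1 / ((k+1 : ℕ) + 1)) * Real.sqrt x ≤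
        (({a ∈ Aset | (a : ℝ) ≤ x}).ncard : ℝ) := le_trans h5 hcard
    rw [show fA x = (({a ∈ Aset | (a : ℝ) ≤ x}).ncard : ℝ) / Real.sqrt x from rfl]
    rw [le_div_iff₀ hsxpos]
    exact h6
  linarith


theorem stmt_12 :
    ∃ A : Set ℤ, (∀ a ∈ A, 0 < a) ∧ IsPerfectDifferenceSet A ∧
      1 / Real.sqrt 2 ≤
        limsup (fun x : ℝ => (({a ∈ A | (a : ℝ) ≤ x}).ncard : ℝ) / Real.sqrt x) atTop := by
  refine ⟨Aset, Aset_pos, Aset_perfect, ?_⟩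
  have hbdd : IsBoundedUnder (· ≤ ·) atTop fA := by
    apply isBoundedUnder_of_eventually_le (a := 3)
    filter_upwards [eventually_ge_atTop (4:ℝ)] with x hx
    exact fA_bounded x hx
  have hle : ∀ b : ℝ, b < 1 / Real.sqrt 2 → b ≤ limsup fA atTop := by
    intro b hb
    exact le_limsup_of_frequently_le (fA_frequently hb) hbdd
  have : 1 / Real.sqrt 2 ≤ limsup fA atTop := by
    by_contra hcon
    push_neg at hcon
    have h1 := hle ((limsup fA atTop + 1 / Real.sqrt 2) / 2) (by linarith)
    linarith
  exact this
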